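/- Under the hypotheses of the previous bound and additionally assuming liminf (f(n)+g(n))/ln(n) = 0 along an anchor sequence {n_k}, for every ε > 0 there exists K such that for all k > K and 1 ≤ i ≤ n_k, Z(X,T,φ,i,δ) ≤ e^{i·P(X,T,φ)} · n_k^ε. -/

import Mathlib

open Filter Topology MeasureTheory

/-- `z` `η`-shadows the points `x 0, …, x (k-1)` for `n i` iterates with gaps `m i`. -/
def Shadows {X : Type*} [MetricSpace X] (T : X → X) (η : ℝ) (k : ℕ)
    (x : ℕ → X) (n m : ℕ → ℕ) (z : X) : Prop :=
  ∀ i < k, ∀ l < n i,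
    dist (T^[l + ∑ j ∈ Finset.range i, (n j + m j)] z) (T^[l] (x i)) < η

/-- Non-uniform specification with gap bounds `f` at scale `η`. -/
def NonUnifSpec {X : Type*} [MetricSpace X] (T : X → X) (f : ℕ → ℕ) (η : ℝ) : Prop :=
  ∀ (k : ℕ) (x : ℕ → X) (n m : ℕ → ℕ),
    (∀ i, i + 1 < k → max (f (n i)) (f (n (i + 1))) ≤ m i) →
    ∃ z, Shadows T η k x n m z

/-- Expansivity with constant `δ`: some `ℤ`-iterate separates any two distinct points by more than `δ`. -/
def Expansive {X : Type*} [MetricSpace X] [CompactSpace X] (T : X ≃ₜ X) (δ : ℝ) : Prop :=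
  ∀ x y : X, x ≠ y → ∃ n : ℤ,
    δ < dist (((T.toEquiv : Equiv.Perm X) ^ n) x) (((T.toEquiv : Equiv.Perm X) ^ n) y)

/-- Birkhoff partial sums `S_n φ`. -/
def birkhoff {X : Type*} (T : X → X) (φ : X → ℝ) (n : ℕ) (x : X) : ℝ :=
  ∑ i ∈ Finset.range n, φ (T^[i] x)

/-- `g` is a bound for the partial sum variations of `φ` at scale `η`:
`g n ≥ V(X,T,φ,i,η)` whenever `i ≤ n`. -/
def HasVarBounds {X : Type*} [MetricSpace X] (T : X → X) (φ : X → ℝ) (g : ℕ → ℝ) (η : ℝ) : Prop :=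
  ∀ n, ∀ i ≤ n, ∀ x y : X, (∀ j < i, dist (T^[j] x) (T^[j] y) < η) →
    |birkhoff T φ i x - birkhoff T φ i y| ≤ g n

/-- `S` is `(n, ε)`-separated. -/
def IsSep {X : Type*} [MetricSpace X] (T : X → X) (n : ℕ) (ε : ℝ) (S : Set X) : Prop :=
  ∀ x ∈ S, ∀ y ∈ S, x ≠ y → ∃ k < n, ε < dist (T^[k] x) (T^[k] y)

/-- The partition function `Z(X,T,φ,n,ε)`: the maximal value of `∑_{x ∈ S} e^{S_n φ(x)}`
over `(n,ε)`-separated sets `S`. -/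
noncomputable def partFn {X : Type*} [MetricSpace X] (T : X → X) (φ : X → ℝ) (n : ℕ) (ε : ℝ) : ℝ :=
  sSup {r | ∃ S : Finset X, IsSep T n ε ↑S ∧ r = ∑ x ∈ S, Real.exp (birkhoff T φ n x)}


section AuxPartFn

set_option linter.unusedSectionVars false
set_option linter.unusedTactic false

variable {X : Type*} [MetricSpace X]


lemma birkhoff_add (T : X → X) (φ : X → ℝ) (a b : ℕ) (x : X) :
    birkhoff T φ (a + b) x = birkhoff T φ a x + birkhoff T φ b (T^[a] x) := by
  simp only [birkhoff, Finset.sum_range_add]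
  congr 1
  refine Finset.sum_congr rfl fun i _ => ?_
  rw [add_comm a i, Function.iterate_add_apply]

lemma abs_birkhoff_le (T : X → X) (φ : X → ℝ) {C : ℝ} (hC : ∀ y, |φ y| ≤ C)
    (n : ℕ) (x : X) : |birkhoff T φ n x| ≤ n * C := by
  calc |birkhoff T φ n x| ≤ ∑ i ∈ Finset.range n, |φ (T^[i] x)| :=
        Finset.abs_sum_le_sum_abs _ _
    _ ≤ ∑ _i ∈ Finset.range n, C := Finset.sum_le_sum fun i _ => hC _
    _ = n * C := by simp [mul_comm]

-- zpow helpers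
lemma e_pow_apply (T : X ≃ₜ X) (a : ℕ) (x : X) :
    ((T.toEquiv : Equiv.Perm X) ^ (a : ℤ)) x = T^[a] x := by
  rw [zpow_natCast, Equiv.Perm.coe_pow]; rfl

lemma e_neg_apply (T : X ≃ₜ X) (a : ℕ) (x : X) :
    ((T.toEquiv : Equiv.Perm X) ^ (-(a : ℤ))) x = (⇑T.symm)^[a] x := by
  rw [zpow_neg, zpow_natCast, ← inv_pow, Equiv.Perm.coe_pow]; rfl

lemma e_add_apply (T : X ≃ₜ X) (m n : ℤ) (x : X) :
    ((T.toEquiv : Equiv.Perm X) ^ (m + n)) x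
      = ((T.toEquiv : Equiv.Perm X) ^ m) (((T.toEquiv : Equiv.Perm X) ^ n) x) := by
  rw [zpow_add, Equiv.Perm.mul_apply]

lemma e_cont (T : X ≃ₜ X) (m : ℤ) :
    Continuous fun x => ((T.toEquiv : Equiv.Perm X) ^ m) x := by
  obtain ⟨a, rfl | rfl⟩ := Int.eq_nat_or_neg m
  · simp only [e_pow_apply]; exact T.continuous.iterate a
  · simp only [e_neg_apply]; exact T.symm.continuous.iterate a

variable [CompactSpace X]


lemma exists_card_bound (T : X → X) {η : ℝ} (hη : 0 < η) :
    ∃ M : ℕ, ∀ n : ℕ, ∀ S : Finset X, IsSep T n η ↑S → S.card ≤ M ^ n := by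
  obtain ⟨t, -, htf, hcov⟩ := (isCompact_univ : IsCompact (Set.univ : Set X)).finite_cover_balls (half_pos hη)
  refine ⟨htf.toFinset.card, fun n S hS => ?_⟩
  classical
  have hch : ∀ z : X, ∃ y ∈ htf.toFinset, z ∈ Metric.ball y (η / 2) := by
    intro z
    have := hcov (Set.mem_univ z)
    simp only [Set.mem_iUnion] at this
    obtain ⟨y, hy, hz⟩ := this
    exact ⟨y, htf.mem_toFinset.2 hy, hz⟩
  choose c hc hcb using hch
  have : ∀ x ∈ S, ∀ y ∈ S, (fun l : Fin n => c (T^[l] x)) = (fun l : Fin n => c (T^[l] y)) → x = y := by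
    intro x hx y hy hxy
    by_contra hne
    obtain ⟨k, hk, hsep⟩ := hS x hx y hy hne
    have h1 := hcb (T^[k] x)
    have h2 := hcb (T^[k] y)
    have hcc : c (T^[k] x) = c (T^[k] y) := congrFun hxy ⟨k, hk⟩
    rw [Metric.mem_ball] at h1 h2
    have ht3 : dist (T^[k] x) (T^[k] y)
        ≤ dist (T^[k] x) (c (T^[k] x)) + dist (c (T^[k] y)) (T^[k] y) := by
      rw [hcc]; exact dist_triangle _ _ _
    rw [dist_comm] at h2
    linarith
  calc S.card ≤ (Finset.univ : Finset (Fin n → {y // y ∈ htf.toFinset})).card := by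
        apply Finset.card_le_card_of_injOn
          (fun x => fun l : Fin n => (⟨c (T^[l] x), hc _⟩ : {y // y ∈ htf.toFinset}))
        · intro x _; exact Finset.mem_univ _
        · intro x hx y hy hxy
          apply this x hx y hy
          funext l
          exact congrArg Subtype.val (congrFun hxy l)
    _ ≤ htf.toFinset.card ^ n := by
        rw [Finset.card_univ, Fintype.card_fun]
        simp

lemma partSet_bddAbove (T : X → X) (φ : X → ℝ) {η : ℝ} (hη : 0 < η)
    {C : ℝ} (hC : ∀ y, |φ y| ≤ C) (n : ℕ) :
    BddAbove {r | ∃ S : Finset X, IsSep T n η ↑S ∧ r = ∑ x ∈ S, Real.exp (birkhoff T φ n x)} := by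
  obtain ⟨M, hM⟩ := exists_card_bound T hη
  refine ⟨(M ^ n : ℕ) * Real.exp (n * C), ?_⟩
  rintro r ⟨S, hS, rfl⟩
  calc ∑ x ∈ S, Real.exp (birkhoff T φ n x)
      ≤ ∑ _x ∈ S, Real.exp (n * C) := by
        refine Finset.sum_le_sum fun x _ => Real.exp_le_exp.2 ?_
        have := abs_birkhoff_le T φ hC n x
        exact (abs_le.1 this).2
    _ = S.card * Real.exp (n * C) := by rw [Finset.sum_const, nsmul_eq_mul]
    _ ≤ (M ^ n : ℕ) * Real.exp (n * C) := by
        apply mul_le_mul_of_nonneg_right _ (Real.exp_nonneg _)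
        exact_mod_cast hM n S hS

lemma sum_le_partFn (T : X → X) (φ : X → ℝ) {η : ℝ} (hη : 0 < η)
    {C : ℝ} (hC : ∀ y, |φ y| ≤ C) (n : ℕ) {S : Finset X} (hS : IsSep T n η ↑S) :
    ∑ x ∈ S, Real.exp (birkhoff T φ n x) ≤ partFn T φ n η :=
  le_csSup (partSet_bddAbove T φ hη hC n) ⟨S, hS, rfl⟩

lemma partFn_nonneg (T : X → X) (φ : X → ℝ) {η : ℝ} (hη : 0 < η)
    {C : ℝ} (hC : ∀ y, |φ y| ≤ C) (n : ℕ) : 0 ≤ partFn T φ n η := by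
  have h0 : (0:ℝ) ∈ {r | ∃ S : Finset X, IsSep T n η ↑S ∧ r = ∑ x ∈ S, Real.exp (birkhoff T φ n x)} := by
    refine ⟨∅, ?_, by simp⟩
    intro x hx; simp at hx
  exact le_csSup (partSet_bddAbove T φ hη hC n) h0

lemma partFn_le (T : X → X) (φ : X → ℝ) {η B : ℝ} (n : ℕ) (hB : 0 ≤ B)
    (h : ∀ S : Finset X, IsSep T n η ↑S → ∑ x ∈ S, Real.exp (birkhoff T φ n x) ≤ B) :
    partFn T φ n η ≤ B := by
  apply Real.sSup_le _ hB
  rintro r ⟨S, hS, rfl⟩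
  exact h S hS

lemma expansive_uniform (T : X ≃ₜ X) {δ : ℝ} (hδ : 0 < δ) (hexp : Expansive T δ) :
    ∃ N : ℕ, ∀ x y : X, δ / 3 ≤ dist x y → ∃ j : ℤ, j.natAbs ≤ N ∧
      δ < dist (((T.toEquiv : Equiv.Perm X) ^ j) x) (((T.toEquiv : Equiv.Perm X) ^ j) y) := by
  classical
  set K : Set (X × X) := {p | δ / 3 ≤ dist p.1 p.2} with hK
  have hKc : IsCompact K := by
    apply IsClosed.isCompact
    exact isClosed_le continuous_const (continuous_dist.comp
      (continuous_fst.prodMk continuous_snd))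
  have hU : ∀ m : ℤ, IsOpen {p : X × X |
      δ < dist (((T.toEquiv : Equiv.Perm X) ^ m) p.1) (((T.toEquiv : Equiv.Perm X) ^ m) p.2)} := by
    intro m
    apply isOpen_lt continuous_const
    exact (continuous_dist.comp (((e_cont T m).comp continuous_fst).prodMk
      ((e_cont T m).comp continuous_snd)))
  have hcov : K ⊆ ⋃ m : ℤ, {p : X × X |
      δ < dist (((T.toEquiv : Equiv.Perm X) ^ m) p.1) (((T.toEquiv : Equiv.Perm X) ^ m) p.2)} := by
    rintro ⟨x, y⟩ hp
    have hp' : δ / 3 ≤ dist x y := hp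
    have hne : x ≠ y := by
      intro h; subst h; rw [dist_self] at hp'; linarith
    obtain ⟨m, hm⟩ := hexp x y hne
    exact Set.mem_iUnion.2 ⟨m, hm⟩
  obtain ⟨t, ht⟩ := hKc.elim_finite_subcover _ hU hcov
  refine ⟨t.sup Int.natAbs, fun x y hxy => ?_⟩
  have := ht (show (x, y) ∈ K from hxy)
  simp only [Set.mem_iUnion] at this
  obtain ⟨m, hmt, hm⟩ := this
  exact ⟨m, Finset.le_sup hmt, hm⟩

variable [Nonempty X]


lemma iter_symm_iter (T : X ≃ₜ X) (a b : ℕ) (x : X) :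
    (⇑T)^[a] ((⇑T.symm)^[b] x) = ((T.toEquiv : Equiv.Perm X) ^ ((a : ℤ) - b)) x := by
  rw [← e_pow_apply T a, ← e_neg_apply T b, ← e_add_apply, sub_eq_add_neg]

lemma partFn_third_le (T : X ≃ₜ X) (φ : X → ℝ) {δ : ℝ} (hδ : 0 < δ)
    {C : ℝ} (hC : ∀ y, |φ y| ≤ C) {N : ℕ}
    (hN : ∀ x y : X, δ / 3 ≤ dist x y → ∃ j : ℤ, j.natAbs ≤ N ∧
      δ < dist (((T.toEquiv : Equiv.Perm X) ^ j) x) (((T.toEquiv : Equiv.Perm X) ^ j) y))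
    (n : ℕ) :
    partFn (⇑T) φ n (δ / 3) ≤ Real.exp (2 * N * C) * partFn (⇑T) φ (n + 2 * N) δ := by
  classical
  have hC0 : 0 ≤ C := le_trans (abs_nonneg _) (hC (Classical.arbitrary X))
  have hB0 : 0 ≤ Real.exp (2 * N * C) * partFn (⇑T) φ (n + 2 * N) δ :=
    mul_nonneg (Real.exp_nonneg _) (partFn_nonneg (⇑T) φ hδ hC _)
  apply partFn_le _ _ _ hB0
  intro S hS
  set σ : X → X := (⇑T.symm)^[N] with hσ
  have hσinv : ∀ x, (⇑T)^[N] (σ x) = x := by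
    intro x
    rw [hσ, iter_symm_iter, sub_self, zpow_zero, Equiv.Perm.coe_one, id_eq]
  have hσinj : Function.Injective σ := Function.LeftInverse.injective hσinv
  have hsep : IsSep (⇑T) (n + 2 * N) δ ↑(S.image σ) := by
    intro x' hx' y' hy' hne
    simp only [Finset.coe_image, Set.mem_image, Finset.mem_coe] at hx' hy'
    obtain ⟨x, hx, rfl⟩ := hx'
    obtain ⟨y, hy, rfl⟩ := hy'
    have hxy : x ≠ y := fun h => hne (by rw [h])
    obtain ⟨l, hl, hdl⟩ := hS x hx y hy hxy
    obtain ⟨j, hj, hdj⟩ := hN _ _ (le_of_lt hdl)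
    have hj1 : -(N : ℤ) ≤ j := by omega
    have hj2 : j ≤ N := by omega
    refine ⟨(j + l + N).toNat, by omega, ?_⟩
    have hk2 : ((j + l + N).toNat : ℤ) - (N : ℤ) = j + l := by omega
    have h1 : ∀ w : X, (⇑T)^[(j + l + N).toNat] (σ w)
        = ((T.toEquiv : Equiv.Perm X) ^ j) ((⇑T)^[l] w) := by
      intro w
      rw [hσ, iter_symm_iter, hk2, e_add_apply, e_pow_apply]
    rw [h1, h1]
    exact hdj
  have hbk : ∀ x, birkhoff (⇑T) φ n x - 2 * N * C ≤ birkhoff (⇑T) φ (n + 2 * N) (σ x) := by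
    intro x
    have hdec : birkhoff (⇑T) φ (n + 2 * N) (σ x)
        = birkhoff (⇑T) φ N (σ x) + birkhoff (⇑T) φ n x + birkhoff (⇑T) φ N ((⇑T)^[n] x) := by
      have e1 : n + 2 * N = N + (n + N) := by omega
      rw [e1, birkhoff_add, birkhoff_add, hσinv]
      ring
    have b1 := abs_birkhoff_le (⇑T) φ hC N (σ x)
    have b2 := abs_birkhoff_le (⇑T) φ hC N ((⇑T)^[n] x)
    rw [abs_le] at b1 b2
    rw [hdec]
    push_cast
    linarith [b1.1, b2.1]
  calc ∑ x ∈ S, Real.exp (birkhoff (⇑T) φ n x)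
      = ∑ x ∈ S, Real.exp (2 * N * C) * Real.exp (birkhoff (⇑T) φ n x - 2 * N * C) := by
        refine Finset.sum_congr rfl fun x _ => ?_
        rw [← Real.exp_add]
        ring_nf
    _ ≤ ∑ x ∈ S, Real.exp (2 * N * C) * Real.exp (birkhoff (⇑T) φ (n + 2 * N) (σ x)) := by
        refine Finset.sum_le_sum fun x _ => ?_
        exact mul_le_mul_of_nonneg_left (Real.exp_le_exp.2 (hbk x)) (Real.exp_nonneg _)
    _ = Real.exp (2 * N * C) * ∑ x' ∈ S.image σ, Real.exp (birkhoff (⇑T) φ (n + 2 * N) x') := by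
        rw [Finset.sum_image (fun a _ b _ h => hσinj h), Finset.mul_sum]
    _ ≤ Real.exp (2 * N * C) * partFn (⇑T) φ (n + 2 * N) δ := by
        apply mul_le_mul_of_nonneg_left _ (Real.exp_nonneg _)
        exact sum_le_partFn (⇑T) φ hδ hC _ hsep

lemma birkhoff_mul (T : X → X) (φ : X → ℝ) (c q : ℕ) (x : X) :
    birkhoff T φ (q * c) x = ∑ a ∈ Finset.range q, birkhoff T φ c (T^[a * c] x) := by
  induction q with
  | zero => simp [birkhoff]
  | succ n ih =>
      rw [Nat.succ_mul, birkhoff_add, ih, Finset.sum_range_succ]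

lemma glue_bound (T : X ≃ₜ X) (φ : X → ℝ) {δ : ℝ} (hδ : 0 < δ)
    {f : ℕ → ℕ} (hspec : NonUnifSpec (⇑T) f (δ / 3))
    {g : ℕ → ℝ} (hg : HasVarBounds (⇑T) φ g (δ / 3))
    {C : ℝ} (hC : ∀ y, |φ y| ≤ C)
    (i q : ℕ) {S : Finset X} (hS : IsSep (⇑T) i δ ↑S) :
    (∑ x ∈ S, Real.exp (birkhoff (⇑T) φ i x)) ^ q
      ≤ Real.exp (q * (g i + f i * C)) * partFn (⇑T) φ (q * (i + f i)) (δ / 3) := by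
  classical
  have hδ3 : 0 < δ / 3 := by linarith
  set t := f i with ht
  set L := q * (i + t) with hL
  -- choose shadowing points
  have hz : ∀ p : Fin q → X, ∃ z,
      Shadows (⇑T) (δ / 3) q
        (fun a => if h : a < q then p ⟨a, h⟩ else Classical.arbitrary X)
        (fun _ => i) (fun _ => t) z := by
    intro p
    apply hspec
    intro a _
    simp [ht]
  choose Φ hΦ using hz
  have hshadow : ∀ (p : Fin q → X) (a : Fin q), ∀ l < i,
      dist ((⇑T)^[l + a * (i + t)] (Φ p)) ((⇑T)^[l] (p a)) < δ / 3 := by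
    intro p a l hl
    have := hΦ p a a.2 l hl
    simpa [Finset.sum_const, a.2, mul_comm] using this
  set PF := Fintype.piFinset (fun _ : Fin q => S) with hPF
  have hmem : ∀ p ∈ PF, ∀ a : Fin q, p a ∈ S := by
    intro p hp a
    exact Fintype.mem_piFinset.1 hp a
  -- birkhoff lower bound for glued orbits
  have hbk : ∀ p ∈ PF,
      (∑ a : Fin q, birkhoff (⇑T) φ i (p a)) - q * (g i + t * C)
        ≤ birkhoff (⇑T) φ L (Φ p) := by
    intro p hp
    rw [hL, birkhoff_mul, ← Fin.sum_univ_eq_sum_range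
      (fun a => birkhoff (⇑T) φ (i + t) ((⇑T)^[a * (i + t)] (Φ p)))]
    have hterm : ∀ a : Fin q,
        birkhoff (⇑T) φ i (p a) - (g i + t * C)
          ≤ birkhoff (⇑T) φ (i + t) ((⇑T)^[(a : ℕ) * (i + t)] (Φ p)) := by
      intro a
      set w := (⇑T)^[(a : ℕ) * (i + t)] (Φ p) with hw
      rw [birkhoff_add]
      have h1 : |birkhoff (⇑T) φ i w - birkhoff (⇑T) φ i (p a)| ≤ g i := by
        apply hg i i le_rfl
        intro l hl
        have := hshadow p a l hl
        rwa [hw, ← Function.iterate_add_apply]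
      have h2 := abs_birkhoff_le (⇑T) φ hC t ((⇑T)^[i] w)
      rw [abs_le] at h1 h2
      linarith [h1.1, h2.1]
    have hsum : ∑ a : Fin q, (birkhoff (⇑T) φ i (p a) - (g i + t * C))
        = (∑ a : Fin q, birkhoff (⇑T) φ i (p a)) - q * (g i + t * C) := by
      rw [Finset.sum_sub_distrib, Finset.sum_const, Finset.card_univ, Fintype.card_fin,
        nsmul_eq_mul]
    rw [← hsum]
    exact Finset.sum_le_sum fun a _ => hterm a
  -- separation of glued points
  have hsep : ∀ p ∈ PF, ∀ p' ∈ PF, p ≠ p' →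
      ∃ k < L, δ / 3 < dist ((⇑T)^[k] (Φ p)) ((⇑T)^[k] (Φ p')) := by
    intro p hp p' hp' hne
    obtain ⟨a, ha⟩ : ∃ a : Fin q, p a ≠ p' a := by
      by_contra h
      push_neg at h
      exact hne (funext h)
    obtain ⟨l, hl, hdl⟩ := hS (p a) (hmem p hp a) (p' a) (hmem p' hp' a) ha
    refine ⟨l + (a : ℕ) * (i + t), ?_, ?_⟩
    · have h1 : ((a : ℕ) + 1) * (i + t) ≤ q * (i + t) :=
        Nat.mul_le_mul_right _ (by omega)
      have h2 : l + (a : ℕ) * (i + t) < ((a : ℕ) + 1) * (i + t) := by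
        rw [add_mul, one_mul]; omega
      omega
    · have s1 := hshadow p a l hl
      have s2 := hshadow p' a l hl
      have htri : dist ((⇑T)^[l] (p a)) ((⇑T)^[l] (p' a))
          ≤ dist ((⇑T)^[l] (p a)) ((⇑T)^[l + (a : ℕ) * (i + t)] (Φ p))
            + dist ((⇑T)^[l + (a : ℕ) * (i + t)] (Φ p)) ((⇑T)^[l + (a : ℕ) * (i + t)] (Φ p'))
            + dist ((⇑T)^[l + (a : ℕ) * (i + t)] (Φ p')) ((⇑T)^[l] (p' a)) :=
        dist_triangle4 _ _ _ _
      rw [dist_comm] at s1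
      linarith
  -- the glued set is separated
  have hΦinj : Set.InjOn Φ ↑PF := by
    intro p hp p' hp' hpp
    by_contra hne
    obtain ⟨k, -, hk⟩ := hsep p (by exact_mod_cast hp) p' (by exact_mod_cast hp') hne
    rw [hpp, dist_self] at hk
    linarith
  have hS'' : IsSep (⇑T) L (δ / 3) ↑(PF.image Φ) := by
    intro z hz z' hz' hzz
    simp only [Finset.coe_image, Set.mem_image, Finset.mem_coe] at hz hz'
    obtain ⟨p, hp, rfl⟩ := hz
    obtain ⟨p', hp', rfl⟩ := hz'
    have hne : p ≠ p' := fun h => hzz (by rw [h])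
    exact hsep p hp p' hp' hne
  -- sum over glued set
  have key : ∑ p ∈ PF, Real.exp ((∑ a : Fin q, birkhoff (⇑T) φ i (p a)) - q * (g i + t * C))
      ≤ partFn (⇑T) φ L (δ / 3) := by
    calc ∑ p ∈ PF, Real.exp ((∑ a : Fin q, birkhoff (⇑T) φ i (p a)) - q * (g i + t * C))
        ≤ ∑ p ∈ PF, Real.exp (birkhoff (⇑T) φ L (Φ p)) :=
          Finset.sum_le_sum fun p hp => Real.exp_le_exp.2 (hbk p hp)
      _ = ∑ z ∈ PF.image Φ, Real.exp (birkhoff (⇑T) φ L z) := by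
          rw [Finset.sum_image]
          intro p hp p' hp' h
          exact hΦinj (Finset.mem_coe.2 hp) (Finset.mem_coe.2 hp') h
      _ ≤ partFn (⇑T) φ L (δ / 3) := sum_le_partFn (⇑T) φ hδ3 hC _ hS''
  -- put it together
  calc (∑ x ∈ S, Real.exp (birkhoff (⇑T) φ i x)) ^ q
      = ∑ p ∈ PF, ∏ a : Fin q, Real.exp (birkhoff (⇑T) φ i (p a)) := by
        rw [Finset.sum_pow' S (fun x => Real.exp (birkhoff (⇑T) φ i x)) q]
    _ = ∑ p ∈ PF, Real.exp (∑ a : Fin q, birkhoff (⇑T) φ i (p a)) := by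
        refine Finset.sum_congr rfl fun p hp => ?_
        rw [Real.exp_sum]
    _ = Real.exp (q * (g i + f i * C)) *
          ∑ p ∈ PF, Real.exp ((∑ a : Fin q, birkhoff (⇑T) φ i (p a)) - q * (g i + t * C)) := by
        rw [Finset.mul_sum]
        refine Finset.sum_congr rfl fun p hp => ?_
        rw [← Real.exp_add, ht]
        ring_nf
    _ ≤ Real.exp (q * (g i + f i * C)) * partFn (⇑T) φ (q * (i + f i)) (δ / 3) := by
        apply mul_le_mul_of_nonneg_left _ (Real.exp_nonneg _)
        rw [← ht, ← hL]
        exact key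

lemma core_bound (T : X ≃ₜ X) (φ : X → ℝ) {δ : ℝ} (hδ : 0 < δ)
    {f : ℕ → ℕ} (hspec : NonUnifSpec (⇑T) f (δ / 3))
    {g : ℕ → ℝ} (hg : HasVarBounds (⇑T) φ g (δ / 3))
    {C : ℝ} (hC : ∀ y, |φ y| ≤ C) {N : ℕ}
    (hN : ∀ x y : X, δ / 3 ≤ dist x y → ∃ j : ℤ, j.natAbs ≤ N ∧
      δ < dist (((T.toEquiv : Equiv.Perm X) ^ j) x) (((T.toEquiv : Equiv.Perm X) ^ j) y))
    {P : ℝ}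
    (hPle : ∀ ε' > (0:ℝ), ∃ M : ℕ, ∀ m ≥ M, partFn (⇑T) φ m δ ≤ Real.exp (m * (P + ε')))
    (i : ℕ) (hi : 1 ≤ i) :
    partFn (⇑T) φ i δ ≤ Real.exp (i * P + g i + f i * (C + |P|)) := by
  have hC0 : 0 ≤ C := le_trans (abs_nonneg _) (hC (Classical.arbitrary X))
  apply partFn_le _ _ _ (Real.exp_nonneg _)
  intro S hS
  set A := ∑ x ∈ S, Real.exp (birkhoff (⇑T) φ i x) with hA
  set t := f i with htdef
  rcases le_or_gt A 0 with hA0 | hA0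
  · exact le_trans hA0 (Real.exp_nonneg _)
  -- main case: A > 0
  have hlogA : ∀ ε' > (0:ℝ), Real.log A ≤ g i + t * C + (i + t) * (P + ε') := by
    intro ε' hε'
    obtain ⟨M, hM⟩ := hPle ε' hε'
    set D : ℝ := g i + t * C + (i + t) * (P + ε') with hD
    set R : ℝ := 2 * N * C + (2 * N) * (P + ε') with hR
    have hev : ∀ q : ℕ, q ≥ max M 1 → Real.log A ≤ D + R / q := by
      intro q hq
      have hq1 : 1 ≤ q := le_trans (le_max_right _ _) hq
      have hqM : M ≤ q := le_trans (le_max_left _ _) hq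
      have hqpos : (0:ℝ) < q := by exact_mod_cast hq1
      have step1 : A ^ q ≤ Real.exp (q * (g i + t * C))
          * partFn (⇑T) φ (q * (i + t)) (δ / 3) :=
        glue_bound T φ hδ hspec hg hC i q hS
      have step2 : partFn (⇑T) φ (q * (i + t)) (δ / 3)
          ≤ Real.exp (2 * N * C) * partFn (⇑T) φ (q * (i + t) + 2 * N) δ :=
        partFn_third_le T φ hδ hC hN _
      have hm : q * (i + t) + 2 * N ≥ M := by
        have : q ≤ q * (i + t) := Nat.le_mul_of_pos_right q (by omega)
        omega
      have step3 : partFn (⇑T) φ (q * (i + t) + 2 * N) δ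
          ≤ Real.exp ((q * (i + t) + 2 * N : ℕ) * (P + ε')) := hM _ hm
      have chain : A ^ q ≤ Real.exp (q * (g i + t * C) + 2 * N * C
          + (q * (i + t) + 2 * N : ℕ) * (P + ε')) := by
        rw [Real.exp_add, Real.exp_add]
        calc A ^ q ≤ Real.exp (q * (g i + t * C)) * partFn (⇑T) φ (q * (i + t)) (δ / 3) := step1
          _ ≤ Real.exp (q * (g i + t * C)) *
              (Real.exp (2 * N * C) * partFn (⇑T) φ (q * (i + t) + 2 * N) δ) :=
            mul_le_mul_of_nonneg_left step2 (Real.exp_nonneg _)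
          _ ≤ Real.exp (q * (g i + t * C)) *
              (Real.exp (2 * N * C) * Real.exp ((q * (i + t) + 2 * N : ℕ) * (P + ε'))) := by
            apply mul_le_mul_of_nonneg_left _ (Real.exp_nonneg _)
            exact mul_le_mul_of_nonneg_left step3 (Real.exp_nonneg _)
          _ = _ := by ring
      have hlogpow : (q : ℝ) * Real.log A ≤ q * (g i + t * C) + 2 * N * C
          + (q * (i + t) + 2 * N : ℕ) * (P + ε') := by
        have := Real.log_le_log (by positivity) chain
        rwa [Real.log_pow, Real.log_exp] at this
      have hexpand : (q * (i + t) + 2 * N : ℕ) * (P + ε')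
          = (q : ℝ) * ((i + t) * (P + ε')) + (2 * N) * (P + ε') := by
        push_cast
        ring
      have h2 : (q:ℝ) * Real.log A ≤ q * D + R := by
        rw [hexpand] at hlogpow
        rw [hD, hR]
        nlinarith [hlogpow]
      calc Real.log A = ((q:ℝ) * Real.log A) / q := by field_simp
        _ ≤ ((q:ℝ) * D + R) / q := by
            exact (div_le_div_iff_of_pos_right hqpos).2 h2
        _ = D + R / q := by field_simp
    have htend : Tendsto (fun q : ℕ => D + R / q) atTop (𝓝 D) := by
      have : Tendsto (fun q : ℕ => R / q) atTop (𝓝 0) :=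
        tendsto_const_nhds.div_atTop tendsto_natCast_atTop_atTop
      simpa using tendsto_const_nhds.add this
    exact ge_of_tendsto htend (Filter.eventually_atTop.2 ⟨max M 1, hev⟩)
  have hlogA2 : Real.log A ≤ g i + t * C + (i + t) * P := by
    apply le_of_forall_pos_le_add
    intro c hc
    have hit : (0:ℝ) < i + t := by
      have : (1:ℝ) ≤ i := by exact_mod_cast hi
      positivity
    have := hlogA (c / (i + t)) (by positivity)
    calc Real.log A ≤ g i + t * C + (i + t) * (P + c / (i + t)) := this
      _ = g i + t * C + (i + t) * P + c := by field_simp; ring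

  calc A = Real.exp (Real.log A) := (Real.exp_log hA0).symm
    _ ≤ Real.exp (i * P + g i + f i * (C + |P|)) := by
      apply Real.exp_le_exp.2
      have htP : (t:ℝ) * P ≤ t * |P| := by
        apply mul_le_mul_of_nonneg_left (le_abs_self P) (by positivity)
      have := hlogA2
      rw [htdef] at *
      nlinarith [this, htP]

end AuxPartFn

/-- Along an anchor sequence `n_k` (where `(f(n_k)+g(n_k))/ln n_k → 0`), for every `ε > 0`
there is `K` with `Z(X,T,φ,i,δ) ≤ e^{i·P} · n_k^ε` for all `k > K` and `1 ≤ i ≤ n_k`. -/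
theorem partFn_anchor_bound_spec {X : Type*} [MetricSpace X] [CompactSpace X] [Nonempty X]
    (T : X ≃ₜ X) (δ : ℝ) (hδ : 0 < δ) (hexp : Expansive T δ)
    (f : ℕ → ℕ) (hfm : Monotone f) (hspec : NonUnifSpec (⇑T) f (δ / 3))
    (φ : X → ℝ) (hφ : Continuous φ) (g : ℕ → ℝ) (hgm : Monotone g)
    (hg : HasVarBounds (⇑T) φ g (δ / 3))
    (P : ℝ)
    (hP : Tendsto (fun n : ℕ => Real.log (partFn (⇑T) φ n δ) / n) atTop (𝓝 P))
    (nk : ℕ → ℕ) (hnk : Tendsto nk atTop atTop)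
    (hanchor : Tendsto (fun k : ℕ => ((f (nk k) : ℝ) + g (nk k)) / Real.log (nk k))
      atTop (𝓝 0)) :
    ∀ ε > (0 : ℝ), ∃ K : ℕ, ∀ k > K, ∀ i : ℕ, 1 ≤ i → i ≤ nk k →
      partFn (⇑T) φ i δ ≤ Real.exp ((i : ℝ) * P) * (nk k : ℝ) ^ ε := by
  intro ε hε
  -- bound on |φ|
  obtain ⟨x0, -, hx0⟩ := isCompact_univ.exists_isMaxOn Set.univ_nonempty
    (continuous_abs.comp hφ).continuousOn
  set C : ℝ := |φ x0| with hCdef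
  have hC : ∀ y, |φ y| ≤ C := fun y => hx0 (Set.mem_univ y)
  have hC0 : 0 ≤ C := le_trans (abs_nonneg _) (hC (Classical.arbitrary X))
  -- expansivity constant
  obtain ⟨N, hN⟩ := expansive_uniform T hδ hexp
  -- pressure upper bound
  have hPle : ∀ ε' > (0:ℝ), ∃ M : ℕ, ∀ m ≥ M,
      partFn (⇑T) φ m δ ≤ Real.exp (m * (P + ε')) := by
    intro ε' hε'
    have hev := hP.eventually (gt_mem_nhds (lt_add_of_pos_right P hε'))
    obtain ⟨M0, hM0⟩ := Filter.eventually_atTop.1 hev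
    refine ⟨max M0 1, fun m hm => ?_⟩
    have hm1 : 1 ≤ m := le_trans (le_max_right _ _) hm
    have hmpos : (0:ℝ) < m := by exact_mod_cast hm1
    have := hM0 m (le_trans (le_max_left _ _) hm)
    rw [div_lt_iff₀ hmpos] at this
    rcases lt_or_ge 0 (partFn (⇑T) φ m δ) with hpos | hnp
    · rw [← Real.exp_log hpos]
      exact Real.exp_le_exp.2 (le_of_lt (by linarith))
    · exact le_trans hnp (Real.exp_pos _).le
  -- core bound
  have hcore : ∀ i : ℕ, 1 ≤ i →
      partFn (⇑T) φ i δ ≤ Real.exp (i * P + g i + f i * (C + |P|)) :=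
    core_bound T φ hδ hspec hg hC hN hPle
  -- nonnegativity of g
  have hg0 : ∀ n, 0 ≤ g n := by
    intro n
    have := hg n 0 (Nat.zero_le n) (Classical.arbitrary X) (Classical.arbitrary X)
      (fun j hj => absurd hj (Nat.not_lt_zero j))
    simpa [birkhoff] using this
  set C' : ℝ := C + |P| + 1 with hC'def
  have hC'pos : (0:ℝ) < C' := by positivity
  -- eventual bounds
  have hev1 := hanchor.eventually (gt_mem_nhds (show (0:ℝ) < ε / C' by positivity))
  have hev2 := hnk.eventually_ge_atTop 2
  obtain ⟨K1, hK1⟩ := Filter.eventually_atTop.1 hev1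
  obtain ⟨K2, hK2⟩ := Filter.eventually_atTop.1 hev2
  refine ⟨max K1 K2, fun k hk i hi1 hik => ?_⟩
  have hk1 : K1 ≤ k := le_of_lt (lt_of_le_of_lt (le_max_left _ _) hk)
  have hk2 : K2 ≤ k := le_of_lt (lt_of_le_of_lt (le_max_right _ _) hk)
  have hnk2 : 2 ≤ nk k := hK2 k hk2
  have hnkR : (1:ℝ) < (nk k : ℝ) := by exact_mod_cast lt_of_lt_of_le one_lt_two hnk2
  have hlogpos : 0 < Real.log (nk k) := Real.log_pos hnkR
  have hratio := hK1 k hk1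
  have hfg : C' * ((f (nk k) : ℝ) + g (nk k)) ≤ ε * Real.log (nk k) := by
    rw [div_lt_iff₀ hlogpos] at hratio
    have h1 : (f (nk k) : ℝ) + g (nk k) ≤ ε / C' * Real.log (nk k) := le_of_lt hratio
    calc C' * ((f (nk k) : ℝ) + g (nk k)) ≤ C' * (ε / C' * Real.log (nk k)) :=
          mul_le_mul_of_nonneg_left h1 hC'pos.le
      _ = ε * Real.log (nk k) := by field_simp
  -- monotone transfer
  have hmono : (i:ℝ) * P + g i + f i * (C + |P|)
      ≤ (i:ℝ) * P + ε * Real.log (nk k) := by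
    have hgi : g i ≤ g (nk k) := hgm hik
    have hfi : (f i : ℝ) ≤ (f (nk k) : ℝ) := by exact_mod_cast hfm hik
    have h2 : g i + (f i : ℝ) * (C + |P|) ≤ C' * ((f (nk k) : ℝ) + g (nk k)) := by
      have hfn0 : (0:ℝ) ≤ f (nk k) := Nat.cast_nonneg _
      have hCP : (0:ℝ) ≤ C + |P| := by positivity
      have m1 : (f i : ℝ) * (C + |P|) ≤ (f (nk k) : ℝ) * (C + |P|) :=
        mul_le_mul_of_nonneg_right hfi hCP
      have m2 : (0:ℝ) ≤ (C + |P|) * g (nk k) := mul_nonneg hCP (hg0 (nk k))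
      have hexpand : C' * ((f (nk k) : ℝ) + g (nk k))
          = (f (nk k) : ℝ) * (C + |P|) + (f (nk k) : ℝ) + (C + |P|) * g (nk k) + g (nk k) := by
        rw [hC'def]; ring
      rw [hexpand]
      linarith [hg0 (nk k), hgi]
    linarith [le_trans h2 hfg]
  calc partFn (⇑T) φ i δ ≤ Real.exp (i * P + g i + f i * (C + |P|)) := hcore i hi1
    _ ≤ Real.exp ((i:ℝ) * P + ε * Real.log (nk k)) := Real.exp_le_exp.2 hmono
    _ = Real.exp ((i:ℝ) * P) * (nk k : ℝ) ^ ε := by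
        rw [Real.exp_add]
        congr 1
        rw [Real.rpow_def_of_pos (by linarith : (0:ℝ) < (nk k : ℝ)), mul_comm]
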